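/- For every positive integer n and every real x, the n-th derivative of the arctangent function satisfies dⁿ/dxⁿ arctan(x) = sgn(−x)^(n−1) · (n−1)! / (1+x²)^(n/2) · sin( n · arcsin( 1/√(1+x²) ) ), where sgn(y) = −1 if y < 0 and sgn(y) = 1 if y ≥ 0. -/

import Mathlib

open Real

open Real

lemma sin_step (m : ℝ) (x : ℝ) :
    Real.sin ((m + 1) * (π/2 - arctan x)) * Real.sqrt (1 + x ^ 2)
      = x * Real.sin (m * (π/2 - arctan x)) + Real.cos (m * (π/2 - arctan x)) := by
  have hs : Real.sqrt (1 + x ^ 2) ≠ 0 := by positivity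
  have h1 : (m + 1) * (π/2 - arctan x) = m * (π/2 - arctan x) + (π/2 - arctan x) := by ring
  rw [h1, Real.sin_add, Real.sin_pi_div_two_sub, Real.cos_pi_div_two_sub,
    Real.cos_arctan, Real.sin_arctan]
  field_simp

lemma alg_step (A F m y Q R S C x : ℝ) (hy : y ≠ 0) (hR : R ≠ 0) :
    A * (F * (2 * (x * (-(m / 2) * (Q * S))) + Q * y * (C * (m * (0 - 1 / y)))))
      = A * -1 * (m * F * (Q * R * ((x * S + C) / R))) := by
  field_simp
  ring

lemma arctan_aux (n : ℕ) (x : ℝ) :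
    iteratedDeriv (n + 1) Real.arctan x =
      (-1 : ℝ) ^ n * (Nat.factorial n : ℝ) * (1 + x ^ 2) ^ (-(((n : ℝ) + 1) / 2)) *
        Real.sin (((n : ℝ) + 1) * (π/2 - arctan x)) := by
  induction n generalizing x with
  | zero =>
    have hpos : (0:ℝ) < 1 + x ^ 2 := by positivity
    rw [iteratedDeriv_one, Real.deriv_arctan]
    simp only [Nat.cast_zero, pow_zero, Nat.factorial_zero, Nat.cast_one, zero_add, one_mul]
    rw [Real.sin_pi_div_two_sub, Real.cos_arctan, Real.sqrt_eq_rpow,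
      one_div ((1 + x ^ 2) ^ ((1:ℝ)/2)), ← Real.rpow_neg hpos.le, ← Real.rpow_add hpos]
    norm_num
    rw [Real.rpow_neg_one]
  | succ n ih =>
    have hpos : (0:ℝ) < 1 + x ^ 2 := by positivity
    have hfun : iteratedDeriv (n + 1) Real.arctan = fun y : ℝ =>
        (-1 : ℝ) ^ n * (Nat.factorial n : ℝ) * (1 + y ^ 2) ^ (-(((n : ℝ) + 1) / 2)) *
          Real.sin (((n : ℝ) + 1) * (π/2 - arctan y)) := funext fun y => ih y
    rw [iteratedDeriv_succ, hfun]
    set e : ℝ := -(((n : ℝ) + 1) / 2) with he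
    have h1 : HasDerivAt (fun y : ℝ => 1 + y ^ 2) (2 * x) x := by
      simpa using (hasDerivAt_pow 2 x).const_add 1
    have h2 : HasDerivAt (fun y : ℝ => (1 + y ^ 2) ^ e)
        (2 * x * e * (1 + x ^ 2) ^ (e - 1)) x :=
      h1.rpow_const (Or.inl (ne_of_gt hpos))
    have h3 : HasDerivAt (fun y : ℝ => ((n : ℝ) + 1) * (π/2 - arctan y))
        (((n : ℝ) + 1) * (0 - 1 / (1 + x ^ 2))) x :=
      ((hasDerivAt_const x (π/2)).sub (Real.hasDerivAt_arctan x)).const_mul _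
    have h4 : HasDerivAt (fun y : ℝ => Real.sin (((n : ℝ) + 1) * (π/2 - arctan y)))
        (Real.cos (((n : ℝ) + 1) * (π/2 - arctan x)) * (((n : ℝ) + 1) * (0 - 1 / (1 + x ^ 2)))) x :=
      h3.sin
    have h5 := ((h2.mul h4).const_mul ((-1 : ℝ) ^ n * (Nat.factorial n : ℝ)))
    have hd := h5.deriv
    simp only [mul_assoc, Pi.mul_apply] at hd ⊢
    rw [show (fun y : ℝ =>
        (-1 : ℝ) ^ n * ((Nat.factorial n : ℝ) * ((1 + y ^ 2) ^ e *
          Real.sin (((n : ℝ) + 1) * (π/2 - arctan y))))) = (fun y : ℝ =>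
        (-1 : ℝ) ^ n * (Nat.factorial n : ℝ) * ((1 + y ^ 2) ^ e *
          Real.sin (((n : ℝ) + 1) * (π/2 - arctan y)))) from funext fun y => by ring] at hd ⊢
    rw [hd]
    have hsqrt : 0 < Real.sqrt (1 + x ^ 2) := Real.sqrt_pos.mpr hpos
    have key := sin_step ((n:ℝ) + 1) x
    have hone : (1 + x ^ 2) * (1 / (1 + x ^ 2)) = 1 := mul_one_div_cancel hpos.ne'
    have hc2 : (((n+1).factorial : ℕ) : ℝ) = ((n:ℝ) + 1) * (n.factorial : ℝ) := by
      push_cast [Nat.factorial_succ]; ring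
    have hc1 : ((n+1 : ℕ) : ℝ) = (n:ℝ) + 1 := by push_cast; ring
    rw [hc2, hc1]
    have hexp : -((((n:ℝ) + 1) + 1)/2) = (e - 1) + (1/2 : ℝ) := by rw [he]; ring
    have hsplit : (1 + x ^ 2 : ℝ) ^ e = (1 + x ^ 2) ^ (e - 1) * (1 + x ^ 2) := by
      nth_rewrite 1 [show e = (e - 1) + 1 by ring]
      rw [Real.rpow_add_one hpos.ne']
    rw [hexp, Real.rpow_add hpos, ← Real.sqrt_eq_rpow, hsplit, pow_succ (-1 : ℝ) n]
    set S := Real.sin (((n:ℝ) + 1) * (π/2 - Real.arctan x)) with hS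
    set C := Real.cos (((n:ℝ) + 1) * (π/2 - Real.arctan x)) with hC
    set T := Real.sin (((n:ℝ) + 1 + 1) * (π/2 - Real.arctan x)) with hT
    set R := Real.sqrt (1 + x ^ 2) with hRdef
    set Q := (1 + x ^ 2 : ℝ) ^ (e - 1) with hQ
    clear_value S C T R Q
    rw [he]
    linear_combination ((-1:ℝ)^n * (n.factorial : ℝ) * ((n:ℝ) + 1) * Q) * key
      - ((-1:ℝ)^n * (n.factorial : ℝ) * ((n:ℝ) + 1) * Q * C) * hone

lemma arcsin_inv_sqrt_nonneg {x : ℝ} (hx : 0 ≤ x) :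
    Real.arcsin (1 / Real.sqrt (1 + x ^ 2)) = π/2 - Real.arctan x := by
  have h1 : 0 ≤ Real.arctan x := by rw [← Real.arctan_zero]; exact Real.arctan_strictMono.monotone hx
  have h2 : Real.arctan x < π/2 := Real.arctan_lt_pi_div_two x
  rw [← Real.cos_arctan, ← Real.sin_pi_div_two_sub]
  exact Real.arcsin_sin (by linarith) (by linarith)

lemma arcsin_inv_sqrt_nonpos {x : ℝ} (hx : x ≤ 0) :
    Real.arcsin (1 / Real.sqrt (1 + x ^ 2)) = π/2 + Real.arctan x := by
  have := arcsin_inv_sqrt_nonneg (x := -x) (by linarith)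
  rw [neg_pow, Real.arctan_neg] at this
  simpa using this

/-- The modified signum function: `-1` for negative inputs, `1` otherwise. -/
noncomputable def sgn (y : ℝ) : ℝ := if y < 0 then -1 else 1

theorem arctan_iteratedDeriv_sgn (n : ℕ) (hn : 0 < n) (x : ℝ) :
    iteratedDeriv n Real.arctan x =
      sgn (-x) ^ (n - 1) * (Nat.factorial (n - 1) : ℝ) / (1 + x ^ 2) ^ ((n : ℝ) / 2) *
        Real.sin (n * Real.arcsin (1 / Real.sqrt (1 + x ^ 2))) := by
  have hpos : (0:ℝ) < 1 + x ^ 2 := by positivity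
  obtain ⟨k, rfl⟩ : ∃ k, n = k + 1 := ⟨n - 1, (Nat.succ_pred_eq_of_pos hn).symm⟩
  simp only [Nat.add_sub_cancel]
  rw [arctan_aux k x,
    div_eq_mul_inv (sgn (-x) ^ k * (Nat.factorial k : ℝ)) ((1 + x ^ 2) ^ (((k + 1 : ℕ) : ℝ) / 2)),
    ← Real.rpow_neg hpos.le]
  have hc : (((k + 1 : ℕ)) : ℝ) = (k : ℝ) + 1 := by push_cast; ring
  rw [hc]
  have hkey : (-1 : ℝ) ^ k * Real.sin (((k:ℝ) + 1) * (π/2 - Real.arctan x))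
      = sgn (-x) ^ k * Real.sin (((k:ℝ) + 1) * Real.arcsin (1 / Real.sqrt (1 + x ^ 2))) := by
    rcases lt_or_ge x 0 with hx | hx
    · have hsgn : sgn (-x) = 1 := by unfold sgn; rw [if_neg (show ¬(-x < 0) by linarith)]
      rw [hsgn, one_pow, arcsin_inv_sqrt_nonpos hx.le]
      have hβ : ((k:ℝ) + 1) * (π/2 + Real.arctan x)
          = (k + 1 : ℕ) * π - ((k:ℝ) + 1) * (π/2 - Real.arctan x) := by push_cast; ring
      rw [hβ, Real.sin_nat_mul_pi_sub, pow_succ]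
      ring
    · rcases eq_or_lt_of_le hx with hx0 | hx0
      · have hsgn : sgn (-x) = 1 := by unfold sgn; rw [if_neg (show ¬(-x < 0) by linarith)]
        rw [hsgn, one_pow, arcsin_inv_sqrt_nonneg hx, ← hx0, Real.arctan_zero]
        have hβ : ((k:ℝ) + 1) * (π/2 - 0) = (k + 1 : ℕ) * π - ((k:ℝ) + 1) * (π/2 - 0) := by
          push_cast; ring
        nth_rewrite 2 [hβ]
        rw [Real.sin_nat_mul_pi_sub, pow_succ]
        ring
      · have hsgn : sgn (-x) = -1 := by unfold sgn; rw [if_pos (show -x < 0 by linarith)]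
        rw [hsgn, arcsin_inv_sqrt_nonneg hx]
  calc (-1 : ℝ) ^ k * (Nat.factorial k : ℝ) * (1 + x ^ 2) ^ (-(((k:ℝ) + 1) / 2)) *
        Real.sin (((k:ℝ) + 1) * (π/2 - Real.arctan x))
      = (Nat.factorial k : ℝ) * (1 + x ^ 2) ^ (-(((k:ℝ) + 1) / 2)) *
          ((-1 : ℝ) ^ k * Real.sin (((k:ℝ) + 1) * (π/2 - Real.arctan x))) := by ring
    _ = (Nat.factorial k : ℝ) * (1 + x ^ 2) ^ (-(((k:ℝ) + 1) / 2)) *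
          (sgn (-x) ^ k * Real.sin (((k:ℝ) + 1) * Real.arcsin (1 / Real.sqrt (1 + x ^ 2)))) := by
        rw [hkey]
    _ = sgn (-x) ^ k * (Nat.factorial k : ℝ) * (1 + x ^ 2) ^ (-(((k:ℝ) + 1) / 2)) *
          Real.sin (((k:ℝ) + 1) * Real.arcsin (1 / Real.sqrt (1 + x ^ 2))) := by ring
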